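/- The function f₃(x) = ln Γ(x+1) − (1/2)ln(2π) − (x+1/2)·ln( (x+1/2)(x²+x+23/80)/(x²+x+79/240) ) + (x+1/2) is increasing and concave on (−1/2, ∞). -/

import Mathlib

open Real Set Filter Nat

noncomputable def hh (x : ℝ) : ℝ :=
  Real.log (x+1) + 1
    + (x+1/2) * (Real.log (x+1/2) + Real.log (x^2+x+23/80) - Real.log (x^2+x+79/240))
    - (x+3/2) * (Real.log (x+3/2) + Real.log (x^2+3*x+183/80) - Real.log (x^2+3*x+559/240))

noncomputable def hh1 (x : ℝ) : ℝ :=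
  1/(x+1) + (Real.log (x+1/2) - Real.log (x+3/2))
    + (Real.log (x^2+x+23/80) - Real.log (x^2+3*x+183/80))
    + (Real.log (x^2+3*x+559/240) - Real.log (x^2+x+79/240))
    + (x+1/2) * ((2*x+1)/(x^2+x+23/80) - (2*x+1)/(x^2+x+79/240))
    - (x+3/2) * ((2*x+3)/(x^2+3*x+183/80) - (2*x+3)/(x^2+3*x+559/240))

noncomputable def hh2 (x : ℝ) : ℝ :=
  -(1/(x+1)^2) + (1/(x+1/2) - 1/(x+3/2))
    + ((2*x+1)/(x^2+x+23/80) - (2*x+3)/(x^2+3*x+183/80))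
    + ((2*x+3)/(x^2+3*x+559/240) - (2*x+1)/(x^2+x+79/240))
    + (((2*x+1)/(x^2+x+23/80) - (2*x+1)/(x^2+x+79/240))
       + (x+1/2) * ((2*(x^2+x+23/80) - (2*x+1)*(2*x+1))/(x^2+x+23/80)^2
                    - (2*(x^2+x+79/240) - (2*x+1)*(2*x+1))/(x^2+x+79/240)^2))
    - (((2*x+3)/(x^2+3*x+183/80) - (2*x+3)/(x^2+3*x+559/240))
       + (x+3/2) * ((2*(x^2+3*x+183/80) - (2*x+3)*(2*x+3))/(x^2+3*x+183/80)^2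
                    - (2*(x^2+3*x+559/240) - (2*x+3)*(2*x+3))/(x^2+3*x+559/240)^2))

lemma pPos (x : ℝ) : 0 < x^2+x+23/80 := by nlinarith [sq_nonneg (2*x+1)]
lemma qPos (x : ℝ) : 0 < x^2+x+79/240 := by nlinarith [sq_nonneg (2*x+1)]
lemma p1Pos (x : ℝ) : 0 < x^2+3*x+183/80 := by nlinarith [sq_nonneg (2*x+3)]
lemma q1Pos (x : ℝ) : 0 < x^2+3*x+559/240 := by nlinarith [sq_nonneg (2*x+3)]

lemma hasDerivAt_hh {x : ℝ} (hx : -(1:ℝ)/2 < x) : HasDerivAt hh (hh1 x) x := by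
  have hx1 : (0:ℝ) < x + 1 := by linarith
  have hxh : (0:ℝ) < x + 1/2 := by linarith
  have hx3 : (0:ℝ) < x + 3/2 := by linarith
  have dp : HasDerivAt (fun x : ℝ => x^2+x+23/80) (2*x+1) x := by
    simpa using ((hasDerivAt_pow 2 x).add (hasDerivAt_id x)).add_const (23/80:ℝ)
  have dq : HasDerivAt (fun x : ℝ => x^2+x+79/240) (2*x+1) x := by
    simpa using ((hasDerivAt_pow 2 x).add (hasDerivAt_id x)).add_const (79/240:ℝ)
  have dp1 : HasDerivAt (fun x : ℝ => x^2+3*x+183/80) (2*x+3) x := by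
    simpa using ((hasDerivAt_pow 2 x).add ((hasDerivAt_id x).const_mul 3)).add_const (183/80:ℝ)
  have dq1 : HasDerivAt (fun x : ℝ => x^2+3*x+559/240) (2*x+3) x := by
    simpa using ((hasDerivAt_pow 2 x).add ((hasDerivAt_id x).const_mul 3)).add_const (559/240:ℝ)
  have l1 : HasDerivAt (fun x : ℝ => Real.log (x+1)) (1/(x+1)) x := by
    simpa using ((hasDerivAt_id x).add_const (1:ℝ)).log hx1.ne'
  have lh : HasDerivAt (fun x : ℝ => Real.log (x+1/2)) (1/(x+1/2)) x := by
    simpa using ((hasDerivAt_id x).add_const (1/2:ℝ)).log hxh.ne'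
  have l3 : HasDerivAt (fun x : ℝ => Real.log (x+3/2)) (1/(x+3/2)) x := by
    simpa using ((hasDerivAt_id x).add_const (3/2:ℝ)).log hx3.ne'
  have lp : HasDerivAt (fun x : ℝ => Real.log (x^2+x+23/80)) ((2*x+1)/(x^2+x+23/80)) x :=
    dp.log (pPos x).ne'
  have lq : HasDerivAt (fun x : ℝ => Real.log (x^2+x+79/240)) ((2*x+1)/(x^2+x+79/240)) x :=
    dq.log (qPos x).ne'
  have lp1 : HasDerivAt (fun x : ℝ => Real.log (x^2+3*x+183/80)) ((2*x+3)/(x^2+3*x+183/80)) x :=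
    dp1.log (p1Pos x).ne'
  have lq1 : HasDerivAt (fun x : ℝ => Real.log (x^2+3*x+559/240)) ((2*x+3)/(x^2+3*x+559/240)) x :=
    dq1.log (q1Pos x).ne'
  have m1 : HasDerivAt (fun x : ℝ => (x+1/2) *
      (Real.log (x+1/2) + Real.log (x^2+x+23/80) - Real.log (x^2+x+79/240)))
      (1 * (Real.log (x+1/2) + Real.log (x^2+x+23/80) - Real.log (x^2+x+79/240))
        + (x+1/2) * (1/(x+1/2) + (2*x+1)/(x^2+x+23/80) - (2*x+1)/(x^2+x+79/240))) x :=
    ((hasDerivAt_id x).add_const (1/2:ℝ)).mul ((lh.add lp).sub lq)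
  have m2 : HasDerivAt (fun x : ℝ => (x+3/2) *
      (Real.log (x+3/2) + Real.log (x^2+3*x+183/80) - Real.log (x^2+3*x+559/240)))
      (1 * (Real.log (x+3/2) + Real.log (x^2+3*x+183/80) - Real.log (x^2+3*x+559/240))
        + (x+3/2) * (1/(x+3/2) + (2*x+3)/(x^2+3*x+183/80) - (2*x+3)/(x^2+3*x+559/240))) x :=
    ((hasDerivAt_id x).add_const (3/2:ℝ)).mul ((l3.add lp1).sub lq1)
  have : HasDerivAt hh (1/(x+1) + 0
      + (1 * (Real.log (x+1/2) + Real.log (x^2+x+23/80) - Real.log (x^2+x+79/240))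
        + (x+1/2) * (1/(x+1/2) + (2*x+1)/(x^2+x+23/80) - (2*x+1)/(x^2+x+79/240)))
      - (1 * (Real.log (x+3/2) + Real.log (x^2+3*x+183/80) - Real.log (x^2+3*x+559/240))
        + (x+3/2) * (1/(x+3/2) + (2*x+3)/(x^2+3*x+183/80) - (2*x+3)/(x^2+3*x+559/240)))) x :=
    ((l1.add (hasDerivAt_const x (1:ℝ))).add m1).sub m2
  have e1 : (x+1/2) * (1/(x+1/2) + (2*x+1)/(x^2+x+23/80) - (2*x+1)/(x^2+x+79/240))
      = 1 + (x+1/2) * ((2*x+1)/(x^2+x+23/80) - (2*x+1)/(x^2+x+79/240)) := by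
    rw [mul_sub, mul_add, mul_sub, mul_one_div, div_self hxh.ne']
    ring
  have e2 : (x+3/2) * (1/(x+3/2) + (2*x+3)/(x^2+3*x+183/80) - (2*x+3)/(x^2+3*x+559/240))
      = 1 + (x+3/2) * ((2*x+3)/(x^2+3*x+183/80) - (2*x+3)/(x^2+3*x+559/240)) := by
    rw [mul_sub, mul_add, mul_sub, mul_one_div, div_self hx3.ne']
    ring
  rw [e1, e2] at this
  convert this using 1
  unfold hh1
  ring

lemma hasDerivAt_hh1 {x : ℝ} (hx : -(1:ℝ)/2 < x) : HasDerivAt hh1 (hh2 x) x := by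
  have hx1 : (0:ℝ) < x + 1 := by linarith
  have hxh : (0:ℝ) < x + 1/2 := by linarith
  have hx3 : (0:ℝ) < x + 3/2 := by linarith
  have dp : HasDerivAt (fun x : ℝ => x^2+x+23/80) (2*x+1) x := by
    simpa using ((hasDerivAt_pow 2 x).add (hasDerivAt_id x)).add_const (23/80:ℝ)
  have dq : HasDerivAt (fun x : ℝ => x^2+x+79/240) (2*x+1) x := by
    simpa using ((hasDerivAt_pow 2 x).add (hasDerivAt_id x)).add_const (79/240:ℝ)
  have dp1 : HasDerivAt (fun x : ℝ => x^2+3*x+183/80) (2*x+3) x := by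
    simpa using ((hasDerivAt_pow 2 x).add ((hasDerivAt_id x).const_mul 3)).add_const (183/80:ℝ)
  have dq1 : HasDerivAt (fun x : ℝ => x^2+3*x+559/240) (2*x+3) x := by
    simpa using ((hasDerivAt_pow 2 x).add ((hasDerivAt_id x).const_mul 3)).add_const (559/240:ℝ)
  have d21 : HasDerivAt (fun x : ℝ => 2*x+1) 2 x := by
    simpa using ((hasDerivAt_id x).const_mul 2).add_const (1:ℝ)
  have d23 : HasDerivAt (fun x : ℝ => 2*x+3) 2 x := by
    simpa using ((hasDerivAt_id x).const_mul 2).add_const (3:ℝ)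
  have inv1 : HasDerivAt (fun x : ℝ => 1/(x+1)) ((0*(x+1) - 1*1)/(x+1)^2) x :=
    (hasDerivAt_const x (1:ℝ)).div ((hasDerivAt_id x).add_const 1) hx1.ne'
  have lh : HasDerivAt (fun x : ℝ => Real.log (x+1/2)) (1/(x+1/2)) x := by
    simpa using ((hasDerivAt_id x).add_const (1/2:ℝ)).log hxh.ne'
  have l3 : HasDerivAt (fun x : ℝ => Real.log (x+3/2)) (1/(x+3/2)) x := by
    simpa using ((hasDerivAt_id x).add_const (3/2:ℝ)).log hx3.ne'
  have lp : HasDerivAt (fun x : ℝ => Real.log (x^2+x+23/80)) ((2*x+1)/(x^2+x+23/80)) x :=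
    dp.log (pPos x).ne'
  have lq : HasDerivAt (fun x : ℝ => Real.log (x^2+x+79/240)) ((2*x+1)/(x^2+x+79/240)) x :=
    dq.log (qPos x).ne'
  have lp1 : HasDerivAt (fun x : ℝ => Real.log (x^2+3*x+183/80)) ((2*x+3)/(x^2+3*x+183/80)) x :=
    dp1.log (p1Pos x).ne'
  have lq1 : HasDerivAt (fun x : ℝ => Real.log (x^2+3*x+559/240)) ((2*x+3)/(x^2+3*x+559/240)) x :=
    dq1.log (q1Pos x).ne'
  have rp : HasDerivAt (fun x : ℝ => (2*x+1)/(x^2+x+23/80))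
      ((2*(x^2+x+23/80) - (2*x+1)*(2*x+1))/(x^2+x+23/80)^2) x := d21.div dp (pPos x).ne'
  have rq : HasDerivAt (fun x : ℝ => (2*x+1)/(x^2+x+79/240))
      ((2*(x^2+x+79/240) - (2*x+1)*(2*x+1))/(x^2+x+79/240)^2) x := d21.div dq (qPos x).ne'
  have rp1 : HasDerivAt (fun x : ℝ => (2*x+3)/(x^2+3*x+183/80))
      ((2*(x^2+3*x+183/80) - (2*x+3)*(2*x+3))/(x^2+3*x+183/80)^2) x := d23.div dp1 (p1Pos x).ne'
  have rq1 : HasDerivAt (fun x : ℝ => (2*x+3)/(x^2+3*x+559/240))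
      ((2*(x^2+3*x+559/240) - (2*x+3)*(2*x+3))/(x^2+3*x+559/240)^2) x := d23.div dq1 (q1Pos x).ne'
  have m1 : HasDerivAt (fun x : ℝ => (x+1/2) *
      ((2*x+1)/(x^2+x+23/80) - (2*x+1)/(x^2+x+79/240)))
      (1 * ((2*x+1)/(x^2+x+23/80) - (2*x+1)/(x^2+x+79/240))
        + (x+1/2) * ((2*(x^2+x+23/80) - (2*x+1)*(2*x+1))/(x^2+x+23/80)^2
            - (2*(x^2+x+79/240) - (2*x+1)*(2*x+1))/(x^2+x+79/240)^2)) x :=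
    ((hasDerivAt_id x).add_const (1/2:ℝ)).mul (rp.sub rq)
  have m2 : HasDerivAt (fun x : ℝ => (x+3/2) *
      ((2*x+3)/(x^2+3*x+183/80) - (2*x+3)/(x^2+3*x+559/240)))
      (1 * ((2*x+3)/(x^2+3*x+183/80) - (2*x+3)/(x^2+3*x+559/240))
        + (x+3/2) * ((2*(x^2+3*x+183/80) - (2*x+3)*(2*x+3))/(x^2+3*x+183/80)^2
            - (2*(x^2+3*x+559/240) - (2*x+3)*(2*x+3))/(x^2+3*x+559/240)^2)) x :=
    ((hasDerivAt_id x).add_const (3/2:ℝ)).mul (rp1.sub rq1)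
  have : HasDerivAt hh1 ((0*(x+1) - 1*1)/(x+1)^2 + (1/(x+1/2) - 1/(x+3/2))
      + ((2*x+1)/(x^2+x+23/80) - (2*x+3)/(x^2+3*x+183/80))
      + ((2*x+3)/(x^2+3*x+559/240) - (2*x+1)/(x^2+x+79/240))
      + (1 * ((2*x+1)/(x^2+x+23/80) - (2*x+1)/(x^2+x+79/240))
        + (x+1/2) * ((2*(x^2+x+23/80) - (2*x+1)*(2*x+1))/(x^2+x+23/80)^2
            - (2*(x^2+x+79/240) - (2*x+1)*(2*x+1))/(x^2+x+79/240)^2))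
      - (1 * ((2*x+3)/(x^2+3*x+183/80) - (2*x+3)/(x^2+3*x+559/240))
        + (x+3/2) * ((2*(x^2+3*x+183/80) - (2*x+3)*(2*x+3))/(x^2+3*x+183/80)^2
            - (2*(x^2+3*x+559/240) - (2*x+3)*(2*x+3))/(x^2+3*x+559/240)^2))) x :=
    ((((inv1.add (lh.sub l3)).add (lp.sub lp1)).add (lq1.sub lq)).add m1).sub m2
  convert this using 1
  unfold hh2
  ring


lemma frac_helper (a b c : ℝ) (hb : b ≠ 0) : a/b*(b*c) = a*c := by
  field_simp

set_option maxHeartbeats 4000000 in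
set_option maxRecDepth 100000 in
lemma hh2_pos {x : ℝ} (hx : -(1:ℝ)/2 < x) : 0 < hh2 x := by
  have hx1 : (0:ℝ) < x + 1 := by linarith
  have hxh : (0:ℝ) < x + 1/2 := by linarith
  have hx3 : (0:ℝ) < x + 3/2 := by linarith
  have hp := pPos x
  have hq := qPos x
  have hp1 := p1Pos x
  have hq1 := q1Pos x
  have n1sq : ((x+1:ℝ))^2 ≠ 0 := pow_ne_zero 2 hx1.ne'
  have nh : (x+1/2:ℝ) ≠ 0 := hxh.ne'
  have n3 : (x+3/2:ℝ) ≠ 0 := hx3.ne'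
  have np : (x^2+x+23/80:ℝ) ≠ 0 := hp.ne'
  have nq : (x^2+x+79/240:ℝ) ≠ 0 := hq.ne'
  have np1 : (x^2+3*x+183/80:ℝ) ≠ 0 := hp1.ne'
  have nq1 : (x^2+3*x+559/240:ℝ) ≠ 0 := hq1.ne'
  have npsq : ((x^2+x+23/80:ℝ))^2 ≠ 0 := pow_ne_zero 2 np
  have nqsq : ((x^2+x+79/240:ℝ))^2 ≠ 0 := pow_ne_zero 2 nq
  have np1sq : ((x^2+3*x+183/80:ℝ))^2 ≠ 0 := pow_ne_zero 2 np1
  have nq1sq : ((x^2+3*x+559/240:ℝ))^2 ≠ 0 := pow_ne_zero 2 nq1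
  have expand : hh2 x * ((x+1)^2 * (x+1/2) * (x+3/2) * (x^2+x+23/80)^2 * (x^2+x+79/240)^2 * (x^2+3*x+183/80)^2 * (x^2+3*x+559/240)^2) =
      0 - (1/(x+1)^2 * ((x+1)^2 * ((3838779265841689/20132659200000000 : ℝ) + (30083722147667929/7549747200000000 : ℝ) * x + (593673996954318809/15099494400000000 : ℝ) * x^2 + (1075005619285481/4423680000000 : ℝ) * x^3 + (18628735618392781/17694720000000 : ℝ) * x^4 + (8997735553184809/2654208000000 : ℝ) * x^5 + (44573144186599523/5308416000000 : ℝ) * x^6 + (67749128029231/4147200000 : ℝ) * x^7 + (838588245955831/33177600000 : ℝ) * x^8 + (1038383578351/33177600 : ℝ) * x^9 + (10304311639279/331776000 : ℝ) * x^10 + (221588093/9000 : ℝ) * x^11 + (835213489/54000 : ℝ) * x^12 + (18221623/2400 : ℝ) * x^13 + (13668689/4800 : ℝ) * x^14 + (11812/15 : ℝ) * x^15 + (9073/60 : ℝ) * x^16 + (18 : ℝ) * x^17 + (1 : ℝ) * x^18)))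
      + 1/(x+1/2) * ((x+1/2) * ((3838779265841689/10066329600000000 : ℝ) + (30083722147667929/3774873600000000 : ℝ) * x + (2386212325614800303/30198988800000000 : ℝ) * x^2 + (22342570735346090827/45298483200000000 : ℝ) * x^3 + (153575404754903237/70778880000000 : ℝ) * x^4 + (757782554557204841/106168320000000 : ℝ) * x^5 + (38610863485597081/2123366400000 : ℝ) * x^6 + (194666969285983283/5308416000000 : ℝ) * x^7 + (1968975775104757/33177600000 : ℝ) * x^8 + (1288577319391753/16588800000 : ℝ) * x^9 + (54745277112089/663552000 : ℝ) * x^10 + (23576887932751/331776000 : ℝ) * x^11 + (9486368407/192000 : ℝ) * x^12 + (23740830049/864000 : ℝ) * x^13 + (38537173/3200 : ℝ) * x^14 + (19509409/4800 : ℝ) * x^15 + (3056/3 : ℝ) * x^16 + (2677/15 : ℝ) * x^17 + (39/2 : ℝ) * x^18 + (1 : ℝ) * x^19))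
      - 1/(x+3/2) * ((x+3/2) * ((3838779265841689/30198988800000000 : ℝ) + (21335407853725849/7549747200000000 : ℝ) * x + (21574948937181443/724775731200000 : ℝ) * x^2 + (8934779698347603787/45298483200000000 : ℝ) * x^3 + (195474751745523509/212336640000000 : ℝ) * x^4 + (113670446341821227/35389440000000 : ℝ) * x^5 + (92136186844777879/10616832000000 : ℝ) * x^6 + (98528366623063603/5308416000000 : ℝ) * x^7 + (1056902769463751/33177600000 : ℝ) * x^8 + (733550108344253/16588800000 : ℝ) * x^9 + (11016383777321/221184000 : ℝ) * x^10 + (15091004570959/331776000 : ℝ) * x^11 + (11584795601/345600 : ℝ) * x^12 + (17064722569/864000 : ℝ) * x^13 + (87989821/9600 : ℝ) * x^14 + (15710369/4800 : ℝ) * x^15 + (4336/5 : ℝ) * x^16 + (2407/15 : ℝ) * x^17 + (37/2 : ℝ) * x^18 + (1 : ℝ) * x^19))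
      + (2*x+1)/(x^2+x+23/80) * ((x^2+x+23/80) * ((166903446340943/251658240000000 : ℝ) + (4861861427273201/377487360000000 : ℝ) * x + (89112922803997769/754974720000000 : ℝ) * x^2 + (47936984329253237/70778880000000 : ℝ) * x^3 + (171305579313783521/62914560000000 : ℝ) * x^4 + (172710081965264507/21233664000000 : ℝ) * x^5 + (396817785585251923/21233664000000 : ℝ) * x^6 + (4476406649509151/132710400000 : ℝ) * x^7 + (12856403290032143/265420800000 : ℝ) * x^8 + (36967027538449/663552000 : ℝ) * x^9 + (34113723715427/663552000 : ℝ) * x^10 + (26237006489/691200 : ℝ) * x^11 + (61521311999/2764800 : ℝ) * x^12 + (196127903/19200 : ℝ) * x^13 + (68960987/19200 : ℝ) * x^14 + (112021/120 : ℝ) * x^15 + (40543/240 : ℝ) * x^16 + (19 : ℝ) * x^17 + (1 : ℝ) * x^18))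
      - (2*x+3)/(x^2+3*x+183/80) * ((x^2+3*x+183/80) * ((62930807636749/754974720000000 : ℝ) + (2037697204455523/1132462080000000 : ℝ) * x + (13860578484446249/754974720000000 : ℝ) * x^2 + (6236778606924539/53084160000000 : ℝ) * x^3 + (298846515377713289/566231040000000 : ℝ) * x^4 + (37480189053302249/21233664000000 : ℝ) * x^5 + (96596072941138963/21233664000000 : ℝ) * x^6 + (1224519578008793/132710400000 : ℝ) * x^7 + (3958331446951343/265420800000 : ℝ) * x^8 + (4275552371257/221184000 : ℝ) * x^9 + (13350789671267/663552000 : ℝ) * x^10 + (11586128833/691200 : ℝ) * x^11 + (30650964959/2764800 : ℝ) * x^12 + (110174933/19200 : ℝ) * x^13 + (43631387/19200 : ℝ) * x^14 + (26569/40 : ℝ) * x^15 + (32383/240 : ℝ) * x^16 + (17 : ℝ) * x^17 + (1 : ℝ) * x^18))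
      + (2*x+3)/(x^2+3*x+559/240) * ((x^2+3*x+559/240) * ((6867225878071/83886080000000 : ℝ) + (222602186833417/125829120000000 : ℝ) * x + (1515838001374571/83886080000000 : ℝ) * x^2 + (2731397474644099/23592960000000 : ℝ) * x^3 + (98274236640827993/188743680000000 : ℝ) * x^4 + (12339901866008203/7077888000000 : ℝ) * x^5 + (10613994510352267/2359296000000 : ℝ) * x^6 + (404154754964581/44236800000 : ℝ) * x^7 + (1308106131369031/88473600000 : ℝ) * x^8 + (4244200731257/221184000 : ℝ) * x^9 + (4423202685529/221184000 : ℝ) * x^10 + (3843282451/230400 : ℝ) * x^11 + (30537839069/2764800 : ℝ) * x^12 + (329661239/57600 : ℝ) * x^13 + (43558907/19200 : ℝ) * x^14 + (79637/120 : ℝ) * x^15 + (10791/80 : ℝ) * x^16 + (17 : ℝ) * x^17 + (1 : ℝ) * x^18))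
      - (2*x+1)/(x^2+x+79/240) * ((x^2+x+79/240) * ((48592142605591/83886080000000 : ℝ) + (1447570317090937/125829120000000 : ℝ) * x + (9019965337965451/83886080000000 : ℝ) * x^2 + (7404032641962947/11796480000000 : ℝ) * x^3 + (483347261130076793/188743680000000 : ℝ) * x^4 + (54832456961543809/7077888000000 : ℝ) * x^5 + (42442832262501707/2359296000000 : ℝ) * x^6 + (1449112102410067/44236800000 : ℝ) * x^7 + (4192162350102631/88473600000 : ℝ) * x^8 + (12124721749883/221184000 : ℝ) * x^9 + (11240859196249/221184000 : ℝ) * x^10 + (2892201901/76800 : ℝ) * x^11 + (61202765309/2764800 : ℝ) * x^12 + (586518949/57600 : ℝ) * x^13 + (68840507/19200 : ℝ) * x^14 + (111931/120 : ℝ) * x^15 + (13511/80 : ℝ) * x^16 + (19 : ℝ) * x^17 + (1 : ℝ) * x^18))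
      + (2*x+1)/(x^2+x+23/80) * ((x^2+x+23/80) * ((166903446340943/251658240000000 : ℝ) + (4861861427273201/377487360000000 : ℝ) * x + (89112922803997769/754974720000000 : ℝ) * x^2 + (47936984329253237/70778880000000 : ℝ) * x^3 + (171305579313783521/62914560000000 : ℝ) * x^4 + (172710081965264507/21233664000000 : ℝ) * x^5 + (396817785585251923/21233664000000 : ℝ) * x^6 + (4476406649509151/132710400000 : ℝ) * x^7 + (12856403290032143/265420800000 : ℝ) * x^8 + (36967027538449/663552000 : ℝ) * x^9 + (34113723715427/663552000 : ℝ) * x^10 + (26237006489/691200 : ℝ) * x^11 + (61521311999/2764800 : ℝ) * x^12 + (196127903/19200 : ℝ) * x^13 + (68960987/19200 : ℝ) * x^14 + (112021/120 : ℝ) * x^15 + (40543/240 : ℝ) * x^16 + (19 : ℝ) * x^17 + (1 : ℝ) * x^18))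
      - (2*x+1)/(x^2+x+79/240) * ((x^2+x+79/240) * ((48592142605591/83886080000000 : ℝ) + (1447570317090937/125829120000000 : ℝ) * x + (9019965337965451/83886080000000 : ℝ) * x^2 + (7404032641962947/11796480000000 : ℝ) * x^3 + (483347261130076793/188743680000000 : ℝ) * x^4 + (54832456961543809/7077888000000 : ℝ) * x^5 + (42442832262501707/2359296000000 : ℝ) * x^6 + (1449112102410067/44236800000 : ℝ) * x^7 + (4192162350102631/88473600000 : ℝ) * x^8 + (12124721749883/221184000 : ℝ) * x^9 + (11240859196249/221184000 : ℝ) * x^10 + (2892201901/76800 : ℝ) * x^11 + (61202765309/2764800 : ℝ) * x^12 + (586518949/57600 : ℝ) * x^13 + (68840507/19200 : ℝ) * x^14 + (111931/120 : ℝ) * x^15 + (13511/80 : ℝ) * x^16 + (19 : ℝ) * x^17 + (1 : ℝ) * x^18))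
      + (x+1/2) * ((2*(x^2+x+23/80) - (2*x+1)*(2*x+1))/(x^2+x+23/80)^2 * ((x^2+x+23/80)^2 * ((7256671580041/3145728000000 : ℝ) + (173524384246447/4718592000000 : ℝ) * x + (2591626962841583/9437184000000 : ℝ) * x^2 + (2251905769064753/1769472000000 : ℝ) * x^3 + (28940989128384163/7077888000000 : ℝ) * x^4 + (1279657507637717/132710400000 : ℝ) * x^5 + (2288035151697059/132710400000 : ℝ) * x^6 + (63214886273/2654208 : ℝ) * x^7 + (3406685842327/132710400 : ℝ) * x^8 + (4987773863/230400 : ℝ) * x^9 + (2459697263/172800 : ℝ) * x^10 + (866483/120 : ℝ) * x^11 + (10639553/3840 : ℝ) * x^12 + (93323/120 : ℝ) * x^13 + (18077/120 : ℝ) * x^14 + (18 : ℝ) * x^15 + (1 : ℝ) * x^16)))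
      - (x+1/2) * ((2*(x^2+x+79/240) - (2*x+1)*(2*x+1))/(x^2+x+79/240)^2 * ((x^2+x+79/240)^2 * ((1845271238187/1048576000000 : ℝ) + (15520731246943/524288000000 : ℝ) * x + (242621264787327/1048576000000 : ℝ) * x^2 + (219003896711357/196608000000 : ℝ) * x^3 + (2904198640828547/786432000000 : ℝ) * x^4 + (131712208306823/14745600000 : ℝ) * x^5 + (26701019010389/1638400000 : ℝ) * x^6 + (843159403061/36864000 : ℝ) * x^7 + (367961901871/14745600 : ℝ) * x^8 + (4893470897/230400 : ℝ) * x^9 + (1619776277/115200 : ℝ) * x^10 + (573399/80 : ℝ) * x^11 + (31790699/11520 : ℝ) * x^12 + (31051/40 : ℝ) * x^13 + (18067/120 : ℝ) * x^14 + (18 : ℝ) * x^15 + (1 : ℝ) * x^16)))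
      - (2*x+3)/(x^2+3*x+183/80) * ((x^2+3*x+183/80) * ((62930807636749/754974720000000 : ℝ) + (2037697204455523/1132462080000000 : ℝ) * x + (13860578484446249/754974720000000 : ℝ) * x^2 + (6236778606924539/53084160000000 : ℝ) * x^3 + (298846515377713289/566231040000000 : ℝ) * x^4 + (37480189053302249/21233664000000 : ℝ) * x^5 + (96596072941138963/21233664000000 : ℝ) * x^6 + (1224519578008793/132710400000 : ℝ) * x^7 + (3958331446951343/265420800000 : ℝ) * x^8 + (4275552371257/221184000 : ℝ) * x^9 + (13350789671267/663552000 : ℝ) * x^10 + (11586128833/691200 : ℝ) * x^11 + (30650964959/2764800 : ℝ) * x^12 + (110174933/19200 : ℝ) * x^13 + (43631387/19200 : ℝ) * x^14 + (26569/40 : ℝ) * x^15 + (32383/240 : ℝ) * x^16 + (17 : ℝ) * x^17 + (1 : ℝ) * x^18))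
      + (2*x+3)/(x^2+3*x+559/240) * ((x^2+3*x+559/240) * ((6867225878071/83886080000000 : ℝ) + (222602186833417/125829120000000 : ℝ) * x + (1515838001374571/83886080000000 : ℝ) * x^2 + (2731397474644099/23592960000000 : ℝ) * x^3 + (98274236640827993/188743680000000 : ℝ) * x^4 + (12339901866008203/7077888000000 : ℝ) * x^5 + (10613994510352267/2359296000000 : ℝ) * x^6 + (404154754964581/44236800000 : ℝ) * x^7 + (1308106131369031/88473600000 : ℝ) * x^8 + (4244200731257/221184000 : ℝ) * x^9 + (4423202685529/221184000 : ℝ) * x^10 + (3843282451/230400 : ℝ) * x^11 + (30537839069/2764800 : ℝ) * x^12 + (329661239/57600 : ℝ) * x^13 + (43558907/19200 : ℝ) * x^14 + (79637/120 : ℝ) * x^15 + (10791/80 : ℝ) * x^16 + (17 : ℝ) * x^17 + (1 : ℝ) * x^18))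
      - (x+3/2) * ((2*(x^2+3*x+183/80) - (2*x+3)*(2*x+3))/(x^2+3*x+183/80)^2 * ((x^2+3*x+183/80)^2 * ((1031652584209/28311552000000 : ℝ) + (31375391710663/42467328000000 : ℝ) * x + (66446521990703/9437184000000 : ℝ) * x^2 + (221913630981119/5308416000000 : ℝ) * x^3 + (3669628887611689/21233664000000 : ℝ) * x^4 + (69900677230991/132710400000 : ℝ) * x^5 + (162224368805059/132710400000 : ℝ) * x^6 + (9733272049/4423680 : ℝ) * x^7 + (411342894103/132710400 : ℝ) * x^8 + (2366358331/691200 : ℝ) * x^9 + (509900183/172800 : ℝ) * x^10 + (941399/480 : ℝ) * x^11 + (3779713/3840 : ℝ) * x^12 + (14411/40 : ℝ) * x^13 + (10877/120 : ℝ) * x^14 + (14 : ℝ) * x^15 + (1 : ℝ) * x^16)))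
      + (x+3/2) * ((2*(x^2+3*x+559/240) - (2*x+3)*(2*x+3))/(x^2+3*x+559/240)^2 * ((x^2+3*x+559/240)^2 * ((36854521707/1048576000000 : ℝ) + (374480427583/524288000000 : ℝ) * x + (7154592313407/1048576000000 : ℝ) * x^2 + (7984296508937/196608000000 : ℝ) * x^3 + (132364286366147/786432000000 : ℝ) * x^4 + (7583749069589/14745600000 : ℝ) * x^5 + (5882560015967/4915200000 : ℝ) * x^6 + (79633054499/36864000 : ℝ) * x^7 + (44999073967/14745600 : ℝ) * x^8 + (778821143/230400 : ℝ) * x^9 + (336585797/115200 : ℝ) * x^10 + (934657/480 : ℝ) * x^11 + (11286059/11520 : ℝ) * x^12 + (43123/120 : ℝ) * x^13 + (10867/120 : ℝ) * x^14 + (14 : ℝ) * x^15 + (1 : ℝ) * x^16))) := by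
    unfold hh2
    ring
  rw [frac_helper ((1:ℝ)) ((x+1)^2) ((3838779265841689/20132659200000000 : ℝ) + (30083722147667929/7549747200000000 : ℝ) * x + (593673996954318809/15099494400000000 : ℝ) * x^2 + (1075005619285481/4423680000000 : ℝ) * x^3 + (18628735618392781/17694720000000 : ℝ) * x^4 + (8997735553184809/2654208000000 : ℝ) * x^5 + (44573144186599523/5308416000000 : ℝ) * x^6 + (67749128029231/4147200000 : ℝ) * x^7 + (838588245955831/33177600000 : ℝ) * x^8 + (1038383578351/33177600 : ℝ) * x^9 + (10304311639279/331776000 : ℝ) * x^10 + (221588093/9000 : ℝ) * x^11 + (835213489/54000 : ℝ) * x^12 + (18221623/2400 : ℝ) * x^13 + (13668689/4800 : ℝ) * x^14 + (11812/15 : ℝ) * x^15 + (9073/60 : ℝ) * x^16 + (18 : ℝ) * x^17 + (1 : ℝ) * x^18) n1sq] at expand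
  rw [frac_helper ((1:ℝ)) ((x+1/2)) ((3838779265841689/10066329600000000 : ℝ) + (30083722147667929/3774873600000000 : ℝ) * x + (2386212325614800303/30198988800000000 : ℝ) * x^2 + (22342570735346090827/45298483200000000 : ℝ) * x^3 + (153575404754903237/70778880000000 : ℝ) * x^4 + (757782554557204841/106168320000000 : ℝ) * x^5 + (38610863485597081/2123366400000 : ℝ) * x^6 + (194666969285983283/5308416000000 : ℝ) * x^7 + (1968975775104757/33177600000 : ℝ) * x^8 + (1288577319391753/16588800000 : ℝ) * x^9 + (54745277112089/663552000 : ℝ) * x^10 + (23576887932751/331776000 : ℝ) * x^11 + (9486368407/192000 : ℝ) * x^12 + (23740830049/864000 : ℝ) * x^13 + (38537173/3200 : ℝ) * x^14 + (19509409/4800 : ℝ) * x^15 + (3056/3 : ℝ) * x^16 + (2677/15 : ℝ) * x^17 + (39/2 : ℝ) * x^18 + (1 : ℝ) * x^19) nh] at expand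
  rw [frac_helper ((1:ℝ)) ((x+3/2)) ((3838779265841689/30198988800000000 : ℝ) + (21335407853725849/7549747200000000 : ℝ) * x + (21574948937181443/724775731200000 : ℝ) * x^2 + (8934779698347603787/45298483200000000 : ℝ) * x^3 + (195474751745523509/212336640000000 : ℝ) * x^4 + (113670446341821227/35389440000000 : ℝ) * x^5 + (92136186844777879/10616832000000 : ℝ) * x^6 + (98528366623063603/5308416000000 : ℝ) * x^7 + (1056902769463751/33177600000 : ℝ) * x^8 + (733550108344253/16588800000 : ℝ) * x^9 + (11016383777321/221184000 : ℝ) * x^10 + (15091004570959/331776000 : ℝ) * x^11 + (11584795601/345600 : ℝ) * x^12 + (17064722569/864000 : ℝ) * x^13 + (87989821/9600 : ℝ) * x^14 + (15710369/4800 : ℝ) * x^15 + (4336/5 : ℝ) * x^16 + (2407/15 : ℝ) * x^17 + (37/2 : ℝ) * x^18 + (1 : ℝ) * x^19) n3] at expand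
  rw [frac_helper ((2*x+1)) ((x^2+x+23/80)) ((166903446340943/251658240000000 : ℝ) + (4861861427273201/377487360000000 : ℝ) * x + (89112922803997769/754974720000000 : ℝ) * x^2 + (47936984329253237/70778880000000 : ℝ) * x^3 + (171305579313783521/62914560000000 : ℝ) * x^4 + (172710081965264507/21233664000000 : ℝ) * x^5 + (396817785585251923/21233664000000 : ℝ) * x^6 + (4476406649509151/132710400000 : ℝ) * x^7 + (12856403290032143/265420800000 : ℝ) * x^8 + (36967027538449/663552000 : ℝ) * x^9 + (34113723715427/663552000 : ℝ) * x^10 + (26237006489/691200 : ℝ) * x^11 + (61521311999/2764800 : ℝ) * x^12 + (196127903/19200 : ℝ) * x^13 + (68960987/19200 : ℝ) * x^14 + (112021/120 : ℝ) * x^15 + (40543/240 : ℝ) * x^16 + (19 : ℝ) * x^17 + (1 : ℝ) * x^18) np] at expand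
  rw [frac_helper ((2*x+3)) ((x^2+3*x+183/80)) ((62930807636749/754974720000000 : ℝ) + (2037697204455523/1132462080000000 : ℝ) * x + (13860578484446249/754974720000000 : ℝ) * x^2 + (6236778606924539/53084160000000 : ℝ) * x^3 + (298846515377713289/566231040000000 : ℝ) * x^4 + (37480189053302249/21233664000000 : ℝ) * x^5 + (96596072941138963/21233664000000 : ℝ) * x^6 + (1224519578008793/132710400000 : ℝ) * x^7 + (3958331446951343/265420800000 : ℝ) * x^8 + (4275552371257/221184000 : ℝ) * x^9 + (13350789671267/663552000 : ℝ) * x^10 + (11586128833/691200 : ℝ) * x^11 + (30650964959/2764800 : ℝ) * x^12 + (110174933/19200 : ℝ) * x^13 + (43631387/19200 : ℝ) * x^14 + (26569/40 : ℝ) * x^15 + (32383/240 : ℝ) * x^16 + (17 : ℝ) * x^17 + (1 : ℝ) * x^18) np1] at expand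
  rw [frac_helper ((2*x+3)) ((x^2+3*x+559/240)) ((6867225878071/83886080000000 : ℝ) + (222602186833417/125829120000000 : ℝ) * x + (1515838001374571/83886080000000 : ℝ) * x^2 + (2731397474644099/23592960000000 : ℝ) * x^3 + (98274236640827993/188743680000000 : ℝ) * x^4 + (12339901866008203/7077888000000 : ℝ) * x^5 + (10613994510352267/2359296000000 : ℝ) * x^6 + (404154754964581/44236800000 : ℝ) * x^7 + (1308106131369031/88473600000 : ℝ) * x^8 + (4244200731257/221184000 : ℝ) * x^9 + (4423202685529/221184000 : ℝ) * x^10 + (3843282451/230400 : ℝ) * x^11 + (30537839069/2764800 : ℝ) * x^12 + (329661239/57600 : ℝ) * x^13 + (43558907/19200 : ℝ) * x^14 + (79637/120 : ℝ) * x^15 + (10791/80 : ℝ) * x^16 + (17 : ℝ) * x^17 + (1 : ℝ) * x^18) nq1] at expand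
  rw [frac_helper ((2*x+1)) ((x^2+x+79/240)) ((48592142605591/83886080000000 : ℝ) + (1447570317090937/125829120000000 : ℝ) * x + (9019965337965451/83886080000000 : ℝ) * x^2 + (7404032641962947/11796480000000 : ℝ) * x^3 + (483347261130076793/188743680000000 : ℝ) * x^4 + (54832456961543809/7077888000000 : ℝ) * x^5 + (42442832262501707/2359296000000 : ℝ) * x^6 + (1449112102410067/44236800000 : ℝ) * x^7 + (4192162350102631/88473600000 : ℝ) * x^8 + (12124721749883/221184000 : ℝ) * x^9 + (11240859196249/221184000 : ℝ) * x^10 + (2892201901/76800 : ℝ) * x^11 + (61202765309/2764800 : ℝ) * x^12 + (586518949/57600 : ℝ) * x^13 + (68840507/19200 : ℝ) * x^14 + (111931/120 : ℝ) * x^15 + (13511/80 : ℝ) * x^16 + (19 : ℝ) * x^17 + (1 : ℝ) * x^18) nq] at expand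
  rw [frac_helper ((2*(x^2+x+23/80) - (2*x+1)*(2*x+1))) ((x^2+x+23/80)^2) ((7256671580041/3145728000000 : ℝ) + (173524384246447/4718592000000 : ℝ) * x + (2591626962841583/9437184000000 : ℝ) * x^2 + (2251905769064753/1769472000000 : ℝ) * x^3 + (28940989128384163/7077888000000 : ℝ) * x^4 + (1279657507637717/132710400000 : ℝ) * x^5 + (2288035151697059/132710400000 : ℝ) * x^6 + (63214886273/2654208 : ℝ) * x^7 + (3406685842327/132710400 : ℝ) * x^8 + (4987773863/230400 : ℝ) * x^9 + (2459697263/172800 : ℝ) * x^10 + (866483/120 : ℝ) * x^11 + (10639553/3840 : ℝ) * x^12 + (93323/120 : ℝ) * x^13 + (18077/120 : ℝ) * x^14 + (18 : ℝ) * x^15 + (1 : ℝ) * x^16) npsq] at expand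
  rw [frac_helper ((2*(x^2+x+79/240) - (2*x+1)*(2*x+1))) ((x^2+x+79/240)^2) ((1845271238187/1048576000000 : ℝ) + (15520731246943/524288000000 : ℝ) * x + (242621264787327/1048576000000 : ℝ) * x^2 + (219003896711357/196608000000 : ℝ) * x^3 + (2904198640828547/786432000000 : ℝ) * x^4 + (131712208306823/14745600000 : ℝ) * x^5 + (26701019010389/1638400000 : ℝ) * x^6 + (843159403061/36864000 : ℝ) * x^7 + (367961901871/14745600 : ℝ) * x^8 + (4893470897/230400 : ℝ) * x^9 + (1619776277/115200 : ℝ) * x^10 + (573399/80 : ℝ) * x^11 + (31790699/11520 : ℝ) * x^12 + (31051/40 : ℝ) * x^13 + (18067/120 : ℝ) * x^14 + (18 : ℝ) * x^15 + (1 : ℝ) * x^16) nqsq] at expand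
  rw [frac_helper ((2*(x^2+3*x+183/80) - (2*x+3)*(2*x+3))) ((x^2+3*x+183/80)^2) ((1031652584209/28311552000000 : ℝ) + (31375391710663/42467328000000 : ℝ) * x + (66446521990703/9437184000000 : ℝ) * x^2 + (221913630981119/5308416000000 : ℝ) * x^3 + (3669628887611689/21233664000000 : ℝ) * x^4 + (69900677230991/132710400000 : ℝ) * x^5 + (162224368805059/132710400000 : ℝ) * x^6 + (9733272049/4423680 : ℝ) * x^7 + (411342894103/132710400 : ℝ) * x^8 + (2366358331/691200 : ℝ) * x^9 + (509900183/172800 : ℝ) * x^10 + (941399/480 : ℝ) * x^11 + (3779713/3840 : ℝ) * x^12 + (14411/40 : ℝ) * x^13 + (10877/120 : ℝ) * x^14 + (14 : ℝ) * x^15 + (1 : ℝ) * x^16) np1sq] at expand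
  rw [frac_helper ((2*(x^2+3*x+559/240) - (2*x+3)*(2*x+3))) ((x^2+3*x+559/240)^2) ((36854521707/1048576000000 : ℝ) + (374480427583/524288000000 : ℝ) * x + (7154592313407/1048576000000 : ℝ) * x^2 + (7984296508937/196608000000 : ℝ) * x^3 + (132364286366147/786432000000 : ℝ) * x^4 + (7583749069589/14745600000 : ℝ) * x^5 + (5882560015967/4915200000 : ℝ) * x^6 + (79633054499/36864000 : ℝ) * x^7 + (44999073967/14745600 : ℝ) * x^8 + (778821143/230400 : ℝ) * x^9 + (336585797/115200 : ℝ) * x^10 + (934657/480 : ℝ) * x^11 + (11286059/11520 : ℝ) * x^12 + (43123/120 : ℝ) * x^13 + (10867/120 : ℝ) * x^14 + (14 : ℝ) * x^15 + (1 : ℝ) * x^16) nq1sq] at expand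
  have hNval : hh2 x * ((x+1)^2 * (x+1/2) * (x+3/2) * (x^2+x+23/80)^2 * (x^2+x+79/240)^2
      * (x^2+3*x+183/80)^2 * (x^2+3*x+559/240)^2) = (166825684249/60397977600000000 : ℝ) + (3972595981/188743680000000 : ℝ) * (x + 1/2)^1 + (295012866563/566231040000000 : ℝ) * (x + 1/2)^2 + (66777391051/14155776000000 : ℝ) * (x + 1/2)^3 + (297092035417/9437184000000 : ℝ) * (x + 1/2)^4 + (20147292749/132710400000 : ℝ) * (x + 1/2)^5 + (74296657243/132710400000 : ℝ) * (x + 1/2)^6 + (4894651067/3317760000 : ℝ) * (x + 1/2)^7 + (34366211867/13271040000 : ℝ) * (x + 1/2)^8 + (24178957/8294400 : ℝ) * (x + 1/2)^9 + (83674657/41472000 : ℝ) * (x + 1/2)^10 + (18029/23040 : ℝ) * (x + 1/2)^11 + (18029/138240 : ℝ) * (x + 1/2)^12 := by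
    rw [expand]; ring
  have hD : (0:ℝ) < (x+1)^2 * (x+1/2) * (x+3/2) * (x^2+x+23/80)^2 * (x^2+x+79/240)^2
      * (x^2+3*x+183/80)^2 * (x^2+3*x+559/240)^2 := by positivity
  have hN : (0:ℝ) < (166825684249/60397977600000000 : ℝ) + (3972595981/188743680000000 : ℝ) * (x + 1/2)^1 + (295012866563/566231040000000 : ℝ) * (x + 1/2)^2 + (66777391051/14155776000000 : ℝ) * (x + 1/2)^3 + (297092035417/9437184000000 : ℝ) * (x + 1/2)^4 + (20147292749/132710400000 : ℝ) * (x + 1/2)^5 + (74296657243/132710400000 : ℝ) * (x + 1/2)^6 + (4894651067/3317760000 : ℝ) * (x + 1/2)^7 + (34366211867/13271040000 : ℝ) * (x + 1/2)^8 + (24178957/8294400 : ℝ) * (x + 1/2)^9 + (83674657/41472000 : ℝ) * (x + 1/2)^10 + (18029/23040 : ℝ) * (x + 1/2)^11 + (18029/138240 : ℝ) * (x + 1/2)^12 := by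
    have h1 : (0:ℝ) ≤ x + 1/2 := le_of_lt hxh
    have e2 := pow_nonneg h1 2
    have e3 := pow_nonneg h1 3
    have e4 := pow_nonneg h1 4
    have e5 := pow_nonneg h1 5
    have e6 := pow_nonneg h1 6
    have e7 := pow_nonneg h1 7
    have e8 := pow_nonneg h1 8
    have e9 := pow_nonneg h1 9
    have e10 := pow_nonneg h1 10
    have e11 := pow_nonneg h1 11
    have e12 := pow_nonneg h1 12
    linarith
  nlinarith [hNval, hD, hN]

lemma pPos' (x : ℝ) : 0 < x^2+x+23/80 := by nlinarith [sq_nonneg (2*x+1)]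
lemma qPos' (x : ℝ) : 0 < x^2+x+79/240 := by nlinarith [sq_nonneg (2*x+1)]
lemma p1Pos' (x : ℝ) : 0 < x^2+3*x+183/80 := by nlinarith [sq_nonneg (2*x+3)]
lemma q1Pos' (x : ℝ) : 0 < x^2+3*x+559/240 := by nlinarith [sq_nonneg (2*x+3)]

lemma tendsto_cdiv (c : ℝ) : Tendsto (fun x : ℝ => c/x) atTop (nhds 0) := by
  simpa [div_eq_mul_inv] using tendsto_inv_atTop_zero.const_mul c

/-- squeeze helper -/
lemma squeeze0 {f lo hi : ℝ → ℝ} (hl : Tendsto lo atTop (nhds 0)) (hh : Tendsto hi atTop (nhds 0))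
    (h1 : ∀ᶠ x in atTop, lo x ≤ f x) (h2 : ∀ᶠ x in atTop, f x ≤ hi x) :
    Tendsto f atTop (nhds 0) :=
  tendsto_of_tendsto_of_tendsto_of_le_of_le' hl hh h1 h2

/-- `log u - log v` with `0 < u ≤ v` is in `[1 - v/u, 0]`. -/
lemma log_sub_lb {u v : ℝ} (hu : 0 < u) (huv : u ≤ v) : 1 - v/u ≤ Real.log u - Real.log v := by
  have hv : 0 < v := lt_of_lt_of_le hu huv
  have h := Real.log_le_sub_one_of_pos (div_pos hv hu)
  rw [Real.log_div hv.ne' hu.ne'] at h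
  linarith

lemma log_sub_ub {u v : ℝ} (hu : 0 < u) (huv : u ≤ v) : Real.log u - Real.log v ≤ 0 := by
  have := Real.log_le_log hu huv
  linarith

lemma tendsto_hh1 : Tendsto hh1 atTop (nhds 0) := by
  have hA : Tendsto (fun x : ℝ => 1/(x+1)) atTop (nhds 0) := by
    simpa [one_div, Function.comp_def] using
      (tendsto_inv_atTop_zero.comp (tendsto_atTop_add_const_right atTop (1:ℝ) tendsto_id))
  have hB : Tendsto (fun x : ℝ => Real.log (x+1/2) - Real.log (x+3/2)) atTop (nhds 0) := by
    refine squeeze0 (tendsto_cdiv (-1)) tendsto_const_nhds ?_ ?_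
    · filter_upwards [eventually_ge_atTop (1:ℝ)] with x hx
      have hu : (0:ℝ) < x + 1/2 := by linarith
      have h1 := log_sub_lb hu (by linarith : x + 1/2 ≤ x + 3/2)
      have h2 : (x+3/2)/(x+1/2) ≤ (x+1)/x := by
        rw [div_le_div_iff₀ hu (by linarith)]
        nlinarith
      have h3 : (x+1)/x = 1 + 1/x := by field_simp
      have h4 : (-1:ℝ)/x = -(1/x) := by ring
      linarith
    · filter_upwards [eventually_ge_atTop (1:ℝ)] with x hx
      exact log_sub_ub (by linarith) (by linarith)
  have hC : Tendsto (fun x : ℝ => Real.log (x^2+x+23/80) - Real.log (x^2+3*x+183/80)) atTop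
      (nhds 0) := by
    refine squeeze0 (tendsto_cdiv (-4)) tendsto_const_nhds ?_ ?_
    · filter_upwards [eventually_ge_atTop (1:ℝ)] with x hx
      have hu := pPos' x
      have h1 := log_sub_lb hu (by nlinarith : x^2+x+23/80 ≤ x^2+3*x+183/80)
      have h2 : (x^2+3*x+183/80)/(x^2+x+23/80) ≤ (x+4)/x := by
        rw [div_le_div_iff₀ hu (by linarith)]
        nlinarith
      have h3 : (x+4)/x = 1 + 4/x := by field_simp
      have h4 : (-4:ℝ)/x = -(4/x) := by ring
      linarith
    · filter_upwards [eventually_ge_atTop (1:ℝ)] with x hx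
      exact log_sub_ub (pPos' x) (by nlinarith)
  have hD : Tendsto (fun x : ℝ => Real.log (x^2+3*x+559/240) - Real.log (x^2+x+79/240)) atTop
      (nhds 0) := by
    refine squeeze0 tendsto_const_nhds ((tendsto_cdiv 4)) ?_ ?_
    · filter_upwards [eventually_ge_atTop (1:ℝ)] with x hx
      have := log_sub_ub (qPos' x) (by nlinarith : x^2+x+79/240 ≤ x^2+3*x+559/240)
      linarith
    · filter_upwards [eventually_ge_atTop (1:ℝ)] with x hx
      have hu := qPos' x
      have h1 := log_sub_lb hu (by nlinarith : x^2+x+79/240 ≤ x^2+3*x+559/240)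
      have h2 : (x^2+3*x+559/240)/(x^2+x+79/240) ≤ (x+4)/x := by
        rw [div_le_div_iff₀ hu (by linarith)]
        nlinarith
      have h3 : (x+4)/x = 1 + 4/x := by field_simp
      linarith
  have hE : Tendsto (fun x : ℝ => (x+1/2) * ((2*x+1)/(x^2+x+23/80) - (2*x+1)/(x^2+x+79/240)))
      atTop (nhds 0) := by
    refine squeeze0 tendsto_const_nhds (tendsto_cdiv 1) ?_ ?_
    · filter_upwards [eventually_ge_atTop (1:ℝ)] with x hx
      have hp := pPos' x
      have hq := qPos' x
      have key : (2*x+1)/(x^2+x+23/80) - (2*x+1)/(x^2+x+79/240)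
          = (2*x+1) * (1/24) / ((x^2+x+23/80) * (x^2+x+79/240)) := by
        field_simp
        ring
      rw [key]
      positivity
    · filter_upwards [eventually_ge_atTop (1:ℝ)] with x hx
      have hp := pPos' x
      have hq := qPos' x
      have key : (2*x+1)/(x^2+x+23/80) - (2*x+1)/(x^2+x+79/240)
          = (2*x+1) * (1/24) / ((x^2+x+23/80) * (x^2+x+79/240)) := by
        field_simp
        ring
      rw [key, mul_div_assoc']
      rw [div_le_div_iff₀ (by positivity) (by linarith : (0:ℝ) < x)]
      nlinarith [sq_nonneg x, sq_nonneg (x*x), sq_nonneg (x*x - x)]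
  have hF : Tendsto (fun x : ℝ => (x+3/2) * ((2*x+3)/(x^2+3*x+183/80) - (2*x+3)/(x^2+3*x+559/240)))
      atTop (nhds 0) := by
    refine squeeze0 tendsto_const_nhds (tendsto_cdiv 2) ?_ ?_
    · filter_upwards [eventually_ge_atTop (1:ℝ)] with x hx
      have hp := p1Pos' x
      have hq := q1Pos' x
      have key : (2*x+3)/(x^2+3*x+183/80) - (2*x+3)/(x^2+3*x+559/240)
          = (2*x+3) * (1/24) / ((x^2+3*x+183/80) * (x^2+3*x+559/240)) := by
        field_simp
        ring
      rw [key]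
      positivity
    · filter_upwards [eventually_ge_atTop (1:ℝ)] with x hx
      have hp := p1Pos' x
      have hq := q1Pos' x
      have key : (2*x+3)/(x^2+3*x+183/80) - (2*x+3)/(x^2+3*x+559/240)
          = (2*x+3) * (1/24) / ((x^2+3*x+183/80) * (x^2+3*x+559/240)) := by
        field_simp
        ring
      rw [key, mul_div_assoc']
      rw [div_le_div_iff₀ (by positivity) (by linarith : (0:ℝ) < x)]
      nlinarith [sq_nonneg x, sq_nonneg (x*x), sq_nonneg (x*x - x)]
  have total := ((((hA.add hB).add hC).add hD).add hE).sub hF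
  have h0 : (0:ℝ) = 0+0+0+0+0-0 := by norm_num
  unfold hh1
  rw [h0]
  exact total

lemma hh1_strictMono : StrictMonoOn hh1 (Ioi (-(1:ℝ)/2)) := by
  refine strictMonoOn_of_deriv_pos (convex_Ioi _) ?_ ?_
  · exact fun x hx => (hasDerivAt_hh1 hx).continuousAt.continuousWithinAt
  · intro x hx
    rw [interior_Ioi] at hx
    rw [(hasDerivAt_hh1 hx).deriv]
    exact hh2_pos hx

lemma hh1_neg {x : ℝ} (hx : -(1:ℝ)/2 < x) : hh1 x < 0 := by
  have h1 : hh1 (x+1) ≤ 0 := by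
    refine ge_of_tendsto tendsto_hh1 ?_
    filter_upwards [eventually_ge_atTop (x+2)] with z hz
    exact (hh1_strictMono (by simp only [mem_Ioi]; linarith) (by simp only [mem_Ioi]; linarith)
      (by linarith)).le
  have h2 : hh1 x < hh1 (x+1) :=
    hh1_strictMono (by simpa using hx) (by simp only [mem_Ioi]; linarith) (by linarith)
  linarith

lemma hh_anti : StrictAntiOn hh (Ioi (-(1:ℝ)/2)) := by
  refine strictAntiOn_of_deriv_neg (convex_Ioi _) ?_ ?_
  · exact fun x hx => (hasDerivAt_hh hx).continuousAt.continuousWithinAt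
  · intro x hx
    rw [interior_Ioi] at hx
    rw [(hasDerivAt_hh hx).deriv]
    exact hh1_neg hx

lemma hh_convex : ConvexOn ℝ (Ioi (-(1:ℝ)/2)) hh := by
  refine MonotoneOn.convexOn_of_deriv (convex_Ioi _) ?_ ?_ ?_
  · exact fun x hx => (hasDerivAt_hh hx).continuousAt.continuousWithinAt
  · intro x hx
    rw [interior_Ioi] at hx
    exact (hasDerivAt_hh hx).differentiableAt.differentiableWithinAt
  · intro a ha b hb hab
    rw [interior_Ioi] at ha hb
    rw [(hasDerivAt_hh ha).deriv, (hasDerivAt_hh hb).deriv]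
    rcases eq_or_lt_of_le hab with rfl | h
    · exact le_refl _
    · exact (hh1_strictMono ha hb h).le

lemma stirling_log : Tendsto (fun n : ℕ =>
    Real.log (n ! : ℝ) - ((n:ℝ) + 1/2) * Real.log n + n - (1/2)*Real.log (2*π)) atTop (nhds 0) := by
  have h0 : Tendsto (fun n : ℕ => Real.log (Stirling.stirlingSeq n) - (1/2) * Real.log π)
      atTop (nhds 0) := by
    have h1 : Tendsto (fun n : ℕ => Real.log (Stirling.stirlingSeq n)) atTop
        (nhds (Real.log (Real.sqrt π))) :=
      ((Real.continuousAt_log (by positivity)).tendsto).comp Stirling.tendsto_stirlingSeq_sqrt_pi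
    have h2 := h1.sub_const ((1/2) * Real.log π)
    have h3 : Real.log (Real.sqrt π) - 1/2 * Real.log π = 0 := by
      rw [Real.log_sqrt Real.pi_pos.le]; ring
    rwa [h3] at h2
  refine h0.congr' ?_
  filter_upwards [eventually_ge_atTop 1] with n hn
  have hn0 : (0:ℝ) < (n:ℝ) := by exact_mod_cast hn
  have hfac : (0:ℝ) < (n ! : ℝ) := by exact_mod_cast Nat.factorial_pos n
  have hsq : (0:ℝ) < Real.sqrt (2*(n:ℝ)) := Real.sqrt_pos.2 (by linarith)
  have hpow : (0:ℝ) < ((n:ℝ)/Real.exp 1) ^ n := pow_pos (div_pos hn0 (Real.exp_pos 1)) n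
  have e : Real.log (Stirling.stirlingSeq n)
      = Real.log (n ! : ℝ) - ((1/2) * Real.log (2*(n:ℝ)) + n * (Real.log n - 1)) := by
    rw [Stirling.stirlingSeq, Real.log_div hfac.ne' (by positivity),
      Real.log_mul hsq.ne' hpow.ne', Real.log_sqrt (by linarith), Real.log_pow,
      Real.log_div hn0.ne' (Real.exp_pos 1).ne', Real.log_exp]
    ring
  rw [e, Real.log_mul two_ne_zero hn0.ne', Real.log_mul two_ne_zero Real.pi_ne_zero]
  ring

lemma tendsto_A (y : ℝ) (hy : 0 ≤ y) (hy1 : y < 1) : Tendsto (fun n : ℕ =>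
    Real.log (Real.Gamma (y + n + 1)) - Real.log (n ! : ℝ) - y * Real.log n) atTop (nhds 0) := by
  have hcv := Real.convexOn_log_Gamma
  refine tendsto_of_tendsto_of_tendsto_of_le_of_le' tendsto_const_nhds
    ((tendsto_cdiv y).comp tendsto_natCast_atTop_atTop) ?_ ?_
  · -- lower bound : 0 ≤ A n
    filter_upwards [eventually_ge_atTop 1] with n hn
    have hn0 : (0:ℝ) < (n:ℝ) := by exact_mod_cast hn
    have hfac : Real.Gamma ((n:ℝ) + 1) = (n ! : ℝ) := Real.Gamma_nat_eq_factorial n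
    rcases eq_or_lt_of_le hy with rfl | hy0
    · have e : (0:ℝ) + (n:ℝ) + 1 = (n:ℝ) + 1 := by ring
      rw [e, hfac]
      simp
    · have key := hcv.slope_mono_adjacent (show (n:ℝ) ∈ Ioi (0:ℝ) from hn0)
        (show (n:ℝ) + 1 + y ∈ Ioi (0:ℝ) by simp only [mem_Ioi]; linarith)
        (show (n:ℝ) < (n:ℝ) + 1 by linarith) (show (n:ℝ) + 1 < (n:ℝ) + 1 + y by linarith)
      have hgn : Real.Gamma ((n:ℝ) + 1) = (n:ℝ) * Real.Gamma n := Real.Gamma_add_one hn0.ne'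
      have hgpos : 0 < Real.Gamma (n:ℝ) := Real.Gamma_pos_of_pos hn0
      have e1 : (Real.log ∘ Real.Gamma) ((n:ℝ)+1) - (Real.log ∘ Real.Gamma) (n:ℝ) = Real.log n := by
        simp only [Function.comp_apply]
        rw [hgn, Real.log_mul hn0.ne' hgpos.ne']
        ring
      rw [div_le_div_iff₀ (by linarith) (by linarith)] at key
      simp only [Function.comp_apply] at key e1
      have e2 : y + (n:ℝ) + 1 = (n:ℝ) + 1 + y := by ring
      rw [e2]
      have := key
      rw [show ((n:ℝ) + 1 - n) = 1 by ring, show ((n:ℝ) + 1 + y - ((n:ℝ)+1)) = y by ring] at this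
      rw [hfac] at *
      nlinarith [this, e1]
  · -- upper bound : A n ≤ y / n
    filter_upwards [eventually_ge_atTop 1] with n hn
    have hn0 : (0:ℝ) < (n:ℝ) := by exact_mod_cast hn
    have hfac : Real.Gamma ((n:ℝ) + 1) = (n ! : ℝ) := Real.Gamma_nat_eq_factorial n
    have hfac2 : Real.Gamma ((n:ℝ) + 2) = ((n+1) ! : ℝ) := by
      have := Real.Gamma_nat_eq_factorial (n+1)
      rw [show (((n+1):ℕ):ℝ) + 1 = (n:ℝ) + 2 by push_cast; ring] at this
      exact this
    have key := hcv.2 (show (n:ℝ) + 1 ∈ Ioi (0:ℝ) by simp only [mem_Ioi]; linarith)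
      (show (n:ℝ) + 2 ∈ Ioi (0:ℝ) by simp only [mem_Ioi]; linarith)
      (show (0:ℝ) ≤ 1 - y by linarith) hy (by ring)
    simp only [Function.comp_apply, smul_eq_mul] at key
    rw [show (1-y) * ((n:ℝ)+1) + y * ((n:ℝ)+2) = y + n + 1 by ring] at key
    rw [hfac, hfac2] at key
    have hfp : (0:ℝ) < (n ! : ℝ) := by exact_mod_cast Nat.factorial_pos n
    have e3 : Real.log ((n+1)! : ℝ) = Real.log ((n:ℝ)+1) + Real.log (n ! : ℝ) := by
      rw [show (((n+1))! : ℝ) = ((n:ℝ)+1) * (n ! : ℝ) by push_cast [Nat.factorial_succ]; ring,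
        Real.log_mul (by linarith) hfp.ne']
    rw [e3] at key
    -- key : log Γ(y+n+1) ≤ (1-y)*log n! + y*(log(n+1) + log n!)
    have hlog : Real.log ((n:ℝ)+1) - Real.log n ≤ 1/n := by
      have h1 := Real.log_le_sub_one_of_pos (show (0:ℝ) < ((n:ℝ)+1)/n by positivity)
      rw [Real.log_div (by linarith) hn0.ne'] at h1
      have : ((n:ℝ)+1)/n - 1 = 1/n := by field_simp; ring
      linarith
    have hyn : y * (Real.log ((n:ℝ)+1) - Real.log n) ≤ y * (1/n) :=
      mul_le_mul_of_nonneg_left hlog hy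
    have : y / (n:ℝ) = y * (1/n) := by ring
    rw [Function.comp_apply, this]
    nlinarith [key, hyn]

lemma tendsto_C (y : ℝ) (hy : 0 ≤ y) : Tendsto (fun t : ℝ =>
    (t+1/2) * (Real.log (t - y) - (Real.log (t+1/2) + Real.log (t^2+t+23/80)
      - Real.log (t^2+t+79/240))) + y + 1/2) atTop (nhds 0) := by
  set c : ℝ := y + 1/2 with hc
  have hc0 : 0 < c := by rw [hc]; linarith
  -- E1 : (t+1/2)*(log (t-y) - log (t+1/2)) → -c
  have hE1 : Tendsto (fun t : ℝ => (t+1/2) * (Real.log (t - y) - Real.log (t+1/2)))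
      atTop (nhds (-c)) := by
    have glog : Tendsto (fun s : ℝ => Real.log (1 + c/s)) atTop (nhds 0) := by
      have h1 : Tendsto (fun s : ℝ => 1 + c/s) atTop (nhds 1) := by
        simpa using tendsto_const_nhds.add (tendsto_cdiv c)
      have := ((Real.continuousAt_log one_ne_zero).tendsto).comp h1
      simpa [Function.comp_def] using this
    have base : Tendsto (fun s : ℝ => -(s * Real.log (1 + c/s) + c * Real.log (1 + c/s)))
        atTop (nhds (-c)) := by
      have h2 := (Real.tendsto_mul_log_one_add_div_atTop c).add (glog.const_mul c)
      have h3 := h2.neg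
      simpa using h3
    have comp : Tendsto (fun t : ℝ =>
        -((t - y) * Real.log (1 + c/(t - y)) + c * Real.log (1 + c/(t - y))))
        atTop (nhds (-c)) := by
      have hshift : Tendsto (fun t : ℝ => t - y) atTop atTop :=
        tendsto_atTop_add_const_right atTop (-y) tendsto_id
      exact base.comp hshift
    refine comp.congr' ?_
    filter_upwards [eventually_ge_atTop (y+1)] with t ht
    have hty : (0:ℝ) < t - y := by linarith
    have hth : (0:ℝ) < t + 1/2 := by linarith
    have e : 1 + c/(t - y) = (t+1/2)/(t - y) := by
      field_simp
      ring
    rw [e, Real.log_div hth.ne' hty.ne']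
    ring
  -- E2 : (t+1/2)*(log p - log q) → 0
  have hE2 : Tendsto (fun t : ℝ => (t+1/2) * (Real.log (t^2+t+23/80) - Real.log (t^2+t+79/240)))
      atTop (nhds 0) := by
    refine tendsto_of_tendsto_of_tendsto_of_le_of_le' (tendsto_cdiv (-1)) tendsto_const_nhds ?_ ?_
    · filter_upwards [eventually_ge_atTop (1:ℝ)] with t ht
      have hp := pPos' t
      have hq := qPos' t
      have hb := log_sub_lb hp (by nlinarith : t^2+t+23/80 ≤ t^2+t+79/240)
      have e : 1 - (t^2+t+79/240)/(t^2+t+23/80) = -((1/24)/(t^2+t+23/80)) := by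
        field_simp
        ring
      have h1 : (t+1/2) * (Real.log (t^2+t+23/80) - Real.log (t^2+t+79/240))
          ≥ (t+1/2) * (1 - (t^2+t+79/240)/(t^2+t+23/80)) :=
        mul_le_mul_of_nonneg_left hb (by linarith)
      have h2 : (t+1/2) * (1 - (t^2+t+79/240)/(t^2+t+23/80)) ≥ -1/t := by
        rw [e]
        have h3 : (t+1/2) * ((1/24)/(t^2+t+23/80)) ≤ 1/t := by
          rw [mul_div_assoc', div_le_div_iff₀ (by positivity) (by linarith)]
          nlinarith
        have h4 : (t+1/2) * -((1/24)/(t^2+t+23/80)) = -((t+1/2) * ((1/24)/(t^2+t+23/80))) := by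
          ring
        rw [h4]
        have : (-1:ℝ)/t = -(1/t) := by ring
        linarith
      linarith
    · filter_upwards [eventually_ge_atTop (1:ℝ)] with t ht
      have hub := log_sub_ub (pPos' t) (by nlinarith : t^2+t+23/80 ≤ t^2+t+79/240)
      have := mul_nonneg (show (0:ℝ) ≤ t + 1/2 by linarith) (neg_nonneg.2 hub)
      nlinarith
  have total := (hE1.sub hE2).add_const (y + 1/2)
  have hval : -c - 0 + (y + 1/2) = 0 := by rw [hc]; ring
  rw [hval] at total
  refine total.congr (fun t => ?_)
  ring

noncomputable def f3 (x : ℝ) : ℝ :=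
  Real.log (Real.Gamma (x + 1)) - (1 / 2) * Real.log (2 * π)
    - (x + 1 / 2) * Real.log ((x + 1 / 2) * (x ^ 2 + x + 23 / 80) / (x ^ 2 + x + 79 / 240))
    + (x + 1 / 2)

lemma logg_split {x : ℝ} (hx : (0:ℝ) < x + 1/2) :
    Real.log ((x + 1/2) * (x^2+x+23/80) / (x^2+x+79/240))
      = Real.log (x+1/2) + Real.log (x^2+x+23/80) - Real.log (x^2+x+79/240) := by
  rw [Real.log_div (mul_ne_zero hx.ne' (pPos' x).ne') (qPos' x).ne', Real.log_mul hx.ne' (pPos' x).ne']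

lemma f3_tendsto_nat (y : ℝ) (hy : 0 ≤ y) (hy1 : y < 1) :
    Tendsto (fun n : ℕ => f3 (y + n)) atTop (nhds 0) := by
  have hyn : Tendsto (fun n : ℕ => y + (n:ℝ)) atTop atTop :=
    tendsto_atTop_add_const_left atTop y tendsto_natCast_atTop_atTop
  have hC := (tendsto_C y hy).comp hyn
  have total := ((tendsto_A y hy hy1).add stirling_log).add hC
  rw [show (0:ℝ) + 0 + 0 = 0 by ring] at total
  refine total.congr' ?_
  filter_upwards [eventually_ge_atTop 1] with n hn
  have hn0 : (0:ℝ) < (n:ℝ) := by exact_mod_cast hn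
  simp only [Function.comp_apply]
  have e0 : (y + (n:ℝ)) - y = (n:ℝ) := by ring
  rw [e0]
  unfold f3
  rw [logg_split (show (0:ℝ) < (y + n) + 1/2 by linarith)]
  ring
lemma f3_tendsto (x : ℝ) : Tendsto (fun N : ℕ => f3 (x + N)) atTop (nhds 0) := by
  have base := f3_tendsto_nat (Int.fract x) (Int.fract_nonneg x) (Int.fract_lt_one x)
  set k : ℤ := ⌊x⌋ with hk
  have hφ : Tendsto (fun N : ℕ => (k + N).toNat) atTop atTop := by
    rw [tendsto_atTop_atTop]
    intro b
    refine ⟨b + k.natAbs + 1, fun n hn => ?_⟩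
    omega
  have comp := base.comp hφ
  refine comp.congr' ?_
  filter_upwards [eventually_ge_atTop (k.natAbs + 1)] with N hN
  simp only [Function.comp_apply]
  congr 1
  have h1 : (0:ℤ) ≤ k + N := by omega
  have h2 : (((k + (N:ℤ)).toNat : ℤ) : ℝ) = ((k:ℝ) + N) := by
    rw [Int.toNat_of_nonneg h1]
    push_cast
    ring
  have h3 : Int.fract x = x - k := Int.self_sub_floor x ▸ rfl
  push_cast at h2 ⊢
  rw [Int.fract]
  rw [← hk]
  linarith [h2]

lemma f3_rec {x : ℝ} (hx : -(1:ℝ)/2 < x) : f3 (x+1) = f3 x + hh x := by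
  have hxh : (0:ℝ) < x + 1/2 := by linarith
  have hx1 : (0:ℝ) < x + 1 := by linarith
  unfold f3 hh
  have hΓ : Real.Gamma (x+1+1) = (x+1) * Real.Gamma (x+1) := Real.Gamma_add_one hx1.ne'
  rw [hΓ, Real.log_mul hx1.ne' (Real.Gamma_pos_of_pos (by linarith)).ne']
  have e1 : x+1+1/2 = x+3/2 := by ring
  have e2 : (x+1)^2+(x+1)+23/80 = x^2+3*x+183/80 := by ring
  have e3 : (x+1)^2+(x+1)+79/240 = x^2+3*x+559/240 := by ring
  rw [e1, e2, e3]
  rw [logg_split hxh]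
  have hx3 : (0:ℝ) < x + 3/2 := by linarith
  have split2 : Real.log ((x + 3/2) * (x^2+3*x+183/80) / (x^2+3*x+559/240))
      = Real.log (x+3/2) + Real.log (x^2+3*x+183/80) - Real.log (x^2+3*x+559/240) := by
    rw [Real.log_div (mul_ne_zero hx3.ne' (p1Pos' x).ne') (q1Pos' x).ne',
      Real.log_mul hx3.ne' (p1Pos' x).ne']
  rw [split2]
  ring

lemma f3_add_nat {x : ℝ} (hx : -(1:ℝ)/2 < x) (N : ℕ) :
    f3 (x + N) = f3 x + ∑ k ∈ Finset.range N, hh (x + k) := by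
  induction N with
  | zero => simp
  | succ n ih =>
    have hxn : -(1:ℝ)/2 < x + n := by
      have : (0:ℝ) ≤ (n:ℝ) := Nat.cast_nonneg n
      linarith
    have e : (x + ((n+1:ℕ):ℝ)) = (x + n) + 1 := by push_cast; ring
    rw [e, f3_rec hxn, ih, Finset.sum_range_succ]
    ring

theorem f3_increasing_concave :
    StrictMonoOn
      (fun x : ℝ => Real.log (Real.Gamma (x + 1)) - (1 / 2) * Real.log (2 * π)
        - (x + 1 / 2) * Real.log ((x + 1 / 2) * (x ^ 2 + x + 23 / 80) / (x ^ 2 + x + 79 / 240))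
        + (x + 1 / 2)) (Set.Ioi (-(1:ℝ) / 2)) ∧
    ConcaveOn ℝ (Set.Ioi (-(1:ℝ) / 2))
      (fun x : ℝ => Real.log (Real.Gamma (x + 1)) - (1 / 2) * Real.log (2 * π)
        - (x + 1 / 2) * Real.log ((x + 1 / 2) * (x ^ 2 + x + 23 / 80) / (x ^ 2 + x + 79 / 240))
        + (x + 1 / 2)) := by
  constructor
  · -- strict monotonicity
    intro x hx y hy hxy
    rw [mem_Ioi] at hx hy
    show f3 x < f3 y
    have hpos : 0 < hh x - hh y := sub_pos.2 (hh_anti (mem_Ioi.2 hx) (mem_Ioi.2 hy) hxy)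
    have key : hh x - hh y ≤ f3 y - f3 x := by
      have lim : Tendsto (fun N : ℕ => (f3 (y+N) - f3 (x+N)) + (hh x - hh y)) atTop
          (nhds (hh x - hh y)) := by
        have := ((f3_tendsto y).sub (f3_tendsto x)).add_const (hh x - hh y)
        rw [show (0:ℝ) - 0 + (hh x - hh y) = hh x - hh y by ring] at this
        exact this
      refine le_of_tendsto lim ?_
      filter_upwards [eventually_ge_atTop 1] with N hN
      rw [f3_add_nat hx N, f3_add_nat hy N]
      have hsum : hh x - hh y ≤ ∑ k ∈ Finset.range N, (hh (x + k) - hh (y + k)) := by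
        have h0 : (0:ℕ) ∈ Finset.range N := Finset.mem_range.2 (by omega)
        have := Finset.single_le_sum (f := fun k : ℕ => hh (x + k) - hh (y + k))
          (fun k _ => ?_) h0
        · simpa using this
        · have hk : (0:ℝ) ≤ (k:ℝ) := Nat.cast_nonneg k
          have := hh_anti (mem_Ioi.2 (by linarith : -(1:ℝ)/2 < x + k))
            (mem_Ioi.2 (by linarith : -(1:ℝ)/2 < y + k)) (by linarith)
          show (0:ℝ) ≤ hh (x + k) - hh (y + k)
          linarith
      rw [Finset.sum_sub_distrib] at hsum
      linarith
    linarith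
  · -- concavity
    refine ⟨convex_Ioi _, ?_⟩
    intro x hx y hy a b ha hb hab
    rw [mem_Ioi] at hx hy
    simp only [smul_eq_mul]
    show a * f3 x + b * f3 y ≤ f3 (a * x + b * y)
    have hz : -(1:ℝ)/2 < a * x + b * y := by
      have := convex_Ioi (-(1:ℝ)/2) (mem_Ioi.2 hx) (mem_Ioi.2 hy) ha hb hab
      simpa using this
    have key : ∀ N : ℕ, a * f3 x + b * f3 y - f3 (a*x+b*y)
        ≤ a * f3 (x+N) + b * f3 (y+N) - f3 ((a*x+b*y)+N) := by
      intro N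
      rw [f3_add_nat hx N, f3_add_nat hy N, f3_add_nat hz N]
      have hsum : ∑ k ∈ Finset.range N, hh ((a*x+b*y) + k)
          ≤ ∑ k ∈ Finset.range N, (a * hh (x + k) + b * hh (y + k)) := by
        refine Finset.sum_le_sum (fun k _ => ?_)
        have hk : (0:ℝ) ≤ (k:ℝ) := Nat.cast_nonneg k
        have hcv := hh_convex.2 (mem_Ioi.2 (by linarith : -(1:ℝ)/2 < x + k))
          (mem_Ioi.2 (by linarith : -(1:ℝ)/2 < y + k)) ha hb hab
        simp only [smul_eq_mul] at hcv
        have e : a * (x + k) + b * (y + k) = (a*x+b*y) + k := by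
          have : a * (x + k) + b * (y + k) = a*x+b*y + (a+b) * k := by ring
          rw [this, hab]; ring
        rw [e] at hcv
        exact hcv
      rw [Finset.sum_add_distrib, ← Finset.mul_sum, ← Finset.mul_sum] at hsum
      linarith
    have lim : Tendsto (fun N : ℕ => a * f3 (x+N) + b * f3 (y+N) - f3 ((a*x+b*y)+N)) atTop
        (nhds 0) := by
      have := (((f3_tendsto x).const_mul a).add ((f3_tendsto y).const_mul b)).sub
        (f3_tendsto (a*x+b*y))
      rw [show a * 0 + b * 0 - 0 = (0:ℝ) by ring] at this
      exact this
    have := ge_of_tendsto lim (Eventually.of_forall key)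
    linarith
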